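/- arXiv:2401.16967 — 5 statements merged into one kernel-verified Lean document; each statement's English description precedes it below -/
import Mathlib

section
/- Let p1, p2, p3 be noncollinear points in ℝ² and let T be the (closed) triangle with these vertices, with area |T| = (1/2)|det(p2 − p1, p3 − p1)|. Let f : ℝ² → ℝ be a polynomial function of total degree at most 2, i.e. f(x, y) = a + b x + c y + d x² + e x y + g y² for real coefficients. Then the integral of f over T with respect to two-dimensional Lebesgue measure equals (|T|/3)·(f(x1) + f(x2) + f(x3)), where x1 = (2/3)p1 + (1/6)p2 + (1/6)p3, x2 = (1/6)p1 + (2/3)p2 + (1/6)p3 and x3 = (1/6)p1 + (1/6)p2 + (2/3)p3. (This is the exactness property of the three-point triangle quadrature rule used by the direct finite element method.) -/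
open MeasureTheory

open Set


lemma int_quad (A B C t : ℝ) :
    ∫ y in (0:ℝ)..t, (A + B*y + C*y^2) = A*t + B*t^2/2 + C*t^3/3 := by
  have h : ∀ y ∈ uIcc (0:ℝ) t,
      HasDerivAt (fun y : ℝ => A*y + B*y^2/2 + C*y^3/3) (A + B*y + C*y^2) y := by
    intro y _
    have h1 : HasDerivAt (fun y : ℝ => A*y) A y := by
      simpa using (hasDerivAt_id y).const_mul A
    have h2 : HasDerivAt (fun y : ℝ => B*y^2/2) (B*y) y := by
      have := ((hasDerivAt_pow 2 y).const_mul B).div_const 2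
      refine this.congr_deriv ?_; push_cast; ring
    have h3 : HasDerivAt (fun y : ℝ => C*y^3/3) (C*y^2) y := by
      have := ((hasDerivAt_pow 3 y).const_mul C).div_const 3
      refine this.congr_deriv ?_; push_cast; ring
    exact (h1.add h2).add h3
  have hi : IntervalIntegrable (fun y : ℝ => A + B*y + C*y^2) volume 0 t :=
    (Continuous.intervalIntegrable (by continuity)) 0 t
  rw [intervalIntegral.integral_eq_sub_of_hasDerivAt h hi]
  ring

lemma int_cubic (A B C D : ℝ) :
    ∫ x in (0:ℝ)..1, (A + B*x + C*x^2 + D*x^3) = A + B/2 + C/3 + D/4 := by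
  have h : ∀ x ∈ uIcc (0:ℝ) 1,
      HasDerivAt (fun x : ℝ => A*x + B*x^2/2 + C*x^3/3 + D*x^4/4)
        (A + B*x + C*x^2 + D*x^3) x := by
    intro x _
    have h1 : HasDerivAt (fun x : ℝ => A*x) A x := by
      simpa using (hasDerivAt_id x).const_mul A
    have h2 : HasDerivAt (fun x : ℝ => B*x^2/2) (B*x) x := by
      have := ((hasDerivAt_pow 2 x).const_mul B).div_const 2
      refine this.congr_deriv ?_; push_cast; ring
    have h3 : HasDerivAt (fun x : ℝ => C*x^3/3) (C*x^2) x := by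
      have := ((hasDerivAt_pow 3 x).const_mul C).div_const 3
      refine this.congr_deriv ?_; push_cast; ring
    have h4 : HasDerivAt (fun x : ℝ => D*x^4/4) (D*x^3) x := by
      have := ((hasDerivAt_pow 4 x).const_mul D).div_const 4
      refine this.congr_deriv ?_; push_cast; ring
    exact ((h1.add h2).add h3).add h4
  have hi : IntervalIntegrable (fun x : ℝ => A + B*x + C*x^2 + D*x^3) volume 0 1 :=
    (Continuous.intervalIntegrable (by continuity)) 0 1
  rw [intervalIntegral.integral_eq_sub_of_hasDerivAt h hi]
  ring

noncomputable def Sref : Set (ℝ × ℝ) := {u : ℝ × ℝ | 0 ≤ u.1 ∧ 0 ≤ u.2 ∧ u.1 + u.2 ≤ 1}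

lemma convex_Sref : Convex ℝ Sref := by
  intro u hu u' hu' a b ha hb hab
  obtain ⟨h1, h2, h3⟩ := hu
  obtain ⟨h1', h2', h3'⟩ := hu'
  refine ⟨?_, ?_, ?_⟩ <;>
    simp only [Prod.fst_add, Prod.snd_add, Prod.smul_fst, Prod.smul_snd, smul_eq_mul] <;>
    nlinarith

lemma Sref_eq_hull :
    convexHull ℝ ({((0:ℝ),(0:ℝ)), ((1:ℝ),(0:ℝ)), ((0:ℝ),(1:ℝ))} : Set (ℝ × ℝ)) = Sref := by
  apply Subset.antisymm
  · apply convexHull_min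
    · intro x hx
      simp only [mem_insert_iff, mem_singleton_iff] at hx
      rcases hx with h | h | h <;> simp [Sref, h]
    · exact convex_Sref
  · rintro ⟨x, y⟩ ⟨h1, h2, h3⟩
    simp only at h1 h2 h3
    have hmem : Finset.univ.centerMass ![1-x-y, x, y] ![((0:ℝ),(0:ℝ)), (1,0), (0,1)] ∈
        convexHull ℝ ({((0:ℝ),(0:ℝ)), ((1:ℝ),(0:ℝ)), ((0:ℝ),(1:ℝ))} : Set (ℝ × ℝ)) := by
      apply Finset.centerMass_mem_convexHull
      · intro i _; fin_cases i <;> simp <;> linarith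
      · simp [Fin.sum_univ_three]; linarith
      · intro i _; fin_cases i <;> simp
    have heq : Finset.univ.centerMass ![1-x-y, x, y] ![((0:ℝ),(0:ℝ)), (1,0), (0,1)] =
        ((x:ℝ), (y:ℝ)) := by
      rw [Finset.centerMass]
      have hs : (∑ i : Fin 3, ![1-x-y, x, y] i) = 1 := by
        simp [Fin.sum_univ_three]; ring
      rw [hs]
      simp [Fin.sum_univ_three, Prod.ext_iff]
    rwa [heq] at hmem

lemma measurableSet_Sref : MeasurableSet Sref := by
  have : IsClosed Sref := by
    have h1 : IsClosed {u : ℝ × ℝ | 0 ≤ u.1} := isClosed_le continuous_const continuous_fst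
    have h2 : IsClosed {u : ℝ × ℝ | 0 ≤ u.2} := isClosed_le continuous_const continuous_snd
    have h3 : IsClosed {u : ℝ × ℝ | u.1 + u.2 ≤ 1} :=
      isClosed_le (continuous_fst.add continuous_snd) continuous_const
    have : Sref = {u : ℝ × ℝ | 0 ≤ u.1} ∩ ({u : ℝ × ℝ | 0 ≤ u.2} ∩ {u : ℝ × ℝ | u.1 + u.2 ≤ 1}) := by
      ext u; constructor
      · rintro ⟨a1, a2, a3⟩; exact ⟨a1, a2, a3⟩
      · rintro ⟨a1, a2, a3⟩; exact ⟨a1, a2, a3⟩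
    rw [this]; exact h1.inter (h2.inter h3)
  exact this.measurableSet

lemma isCompact_Sref : IsCompact Sref := by
  rw [← Sref_eq_hull]
  exact Set.Finite.isCompact_convexHull ℝ (Set.toFinite _)

lemma fubini_Sref (h : ℝ × ℝ → ℝ) (hc : Continuous h) :
    ∫ u in Sref, h u = ∫ x in (0:ℝ)..1, ∫ y in (0:ℝ)..(1-x), h (x, y) := by
  have hint : IntegrableOn h Sref volume :=
    hc.continuousOn.integrableOn_compact isCompact_Sref
  have hind : Integrable (Sref.indicator h) ((volume : Measure ℝ).prod volume) := by
    rw [← Measure.volume_eq_prod]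
    exact (integrable_indicator_iff measurableSet_Sref).2 hint
  have step1 : ∫ u in Sref, h u = ∫ u, Sref.indicator h u ∂((volume : Measure ℝ).prod volume) := by
    rw [← Measure.volume_eq_prod, integral_indicator measurableSet_Sref]
  rw [step1, MeasureTheory.integral_prod _ hind]
  have inner : ∀ x : ℝ, (∫ y, Sref.indicator h (x, y)) =
      (Ici (0:ℝ)).indicator (fun x => ∫ y in Icc (0:ℝ) (1-x), h (x, y)) x := by
    intro x
    rcases le_or_gt 0 x with hx | hx
    · have : (fun y => Sref.indicator h (x, y)) =
          (Icc (0:ℝ) (1-x)).indicator (fun y => h (x, y)) := by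
        funext y
        by_cases hy : y ∈ Icc (0:ℝ) (1-x)
        · obtain ⟨hy1, hy2⟩ := hy
          have hm1 : ((x, y) : ℝ × ℝ) ∈ Sref := ⟨hx, hy1, by dsimp; linarith⟩
          have hm2 : y ∈ Icc (0:ℝ) (1-x) := ⟨hy1, hy2⟩
          rw [Set.indicator_of_mem hm1, Set.indicator_of_mem hm2]
        · rw [Set.indicator_of_notMem hy, Set.indicator_of_notMem]
          intro hmem
          exact hy ⟨hmem.2.1, by have := hmem.2.2; dsimp at this; linarith⟩
      rw [this, integral_indicator measurableSet_Icc,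
        Set.indicator_of_mem (mem_Ici.2 hx)]
    · have : (fun y => Sref.indicator h (x, y)) = fun _ => (0:ℝ) := by
        funext y
        apply Set.indicator_of_notMem
        intro hmem; exact absurd hmem.1 (not_le.2 hx)
      rw [this, integral_zero, Set.indicator_of_notMem (by simpa using hx)]
  rw [integral_congr_ae (Filter.Eventually.of_forall inner)]
  have step2 : (Ici (0:ℝ)).indicator (fun x => ∫ y in Icc (0:ℝ) (1-x), h (x, y)) =
      (Icc (0:ℝ) 1).indicator (fun x => ∫ y in Icc (0:ℝ) (1-x), h (x, y)) := by
    funext x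
    by_cases hx : x ∈ Icc (0:ℝ) 1
    · rw [Set.indicator_of_mem hx, Set.indicator_of_mem (mem_Ici.2 hx.1)]
    · by_cases hx0 : (0:ℝ) ≤ x
      · have hx1 : 1 < x := by
          rcases lt_or_ge 1 x with h' | h'
          · exact h'
          · exact absurd ⟨hx0, h'⟩ hx
        rw [Set.indicator_of_notMem hx, Set.indicator_of_mem (mem_Ici.2 hx0)]
        rw [Set.Icc_eq_empty (by linarith), Measure.restrict_empty, integral_zero_measure]
      · rw [Set.indicator_of_notMem hx, Set.indicator_of_notMem (by simpa using hx0)]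
  rw [step2, integral_indicator measurableSet_Icc]
  rw [setIntegral_congr_fun measurableSet_Icc (g := fun x => ∫ y in (0:ℝ)..(1-x), h (x, y))
    (fun x hx => by
      dsimp only
      rw [integral_Icc_eq_integral_Ioc,
        ← intervalIntegral.integral_of_le (by linarith [hx.2] : (0:ℝ) ≤ 1 - x)])]
  rw [integral_Icc_eq_integral_Ioc, ← intervalIntegral.integral_of_le zero_le_one]

lemma integral_quadratic_Sref (c00 c10 c01 c20 c11 c02 : ℝ) :
    ∫ u in Sref, (c00 + c10*u.1 + c01*u.2 + c20*u.1^2 + c11*u.1*u.2 + c02*u.2^2)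
      = c00/2 + c10/6 + c01/6 + c20/12 + c11/24 + c02/12 := by
  rw [fubini_Sref _ (by continuity)]
  have key : ∀ x : ℝ, (∫ y in (0:ℝ)..(1-x),
      (c00 + c10*x + c01*y + c20*x^2 + c11*x*y + c02*y^2)) =
      (c00 + c01/2 + c02/3) + (c10 - c00 - c01 + c11/2 - c02)*x
        + (c20 - c10 + c01/2 - c11 + c02)*x^2 + (-c20 + c11/2 - c02/3)*x^3 := by
    intro x
    have e1 : (∫ y in (0:ℝ)..(1-x), (c00 + c10*x + c01*y + c20*x^2 + c11*x*y + c02*y^2)) =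
        ∫ y in (0:ℝ)..(1-x), ((c00 + c10*x + c20*x^2) + (c01 + c11*x)*y + c02*y^2) :=
      intervalIntegral.integral_congr (fun y _ => by ring)
    rw [e1, int_quad]; ring
  have e2 : (∫ x in (0:ℝ)..1, ∫ y in (0:ℝ)..(1-x),
      (fun u : ℝ × ℝ => c00 + c10*u.1 + c01*u.2 + c20*u.1^2 + c11*u.1*u.2 + c02*u.2^2) (x, y)) =
      ∫ x in (0:ℝ)..1, ((c00 + c01/2 + c02/3) + (c10 - c00 - c01 + c11/2 - c02)*x
        + (c20 - c10 + c01/2 - c11 + c02)*x^2 + (-c20 + c11/2 - c02/3)*x^3) := by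
    apply intervalIntegral.integral_congr
    intro x _
    dsimp only
    rw [← key x]
  rw [e2, int_cubic]; ring

/-- Exactness of the three-point triangle quadrature rule for polynomials of
total degree at most 2. -/
theorem triangle_quadrature_exact
    (p1 p2 p3 : ℝ × ℝ)
    (hnc : ¬ Collinear ℝ ({p1, p2, p3} : Set (ℝ × ℝ)))
    (f : ℝ × ℝ → ℝ) (a b c d e g : ℝ)
    (hf : ∀ x : ℝ × ℝ, f x = a + b * x.1 + c * x.2 + d * x.1 ^ 2 + e * x.1 * x.2 + g * x.2 ^ 2)
    (T : Set (ℝ × ℝ)) (hT : T = convexHull ℝ ({p1, p2, p3} : Set (ℝ × ℝ)))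
    (areaT : ℝ)
    (harea : areaT = (1 / 2) * |(p2.1 - p1.1) * (p3.2 - p1.2) - (p2.2 - p1.2) * (p3.1 - p1.1)|) :
    ∫ x in T, f x =
      (areaT / 3) *
        (f ((2/3 : ℝ) • p1 + (1/6 : ℝ) • p2 + (1/6 : ℝ) • p3) +
         f ((1/6 : ℝ) • p1 + (2/3 : ℝ) • p2 + (1/6 : ℝ) • p3) +
         f ((1/6 : ℝ) • p1 + (1/6 : ℝ) • p2 + (2/3 : ℝ) • p3)) := by
  set v1 : ℝ := p2.1 - p1.1 with hv1
  set v2 : ℝ := p2.2 - p1.2 with hv2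
  set w1 : ℝ := p3.1 - p1.1 with hw1
  set w2 : ℝ := p3.2 - p1.2 with hw2
  -- nondegeneracy
  have hD : v1 * w2 - v2 * w1 ≠ 0 := by
    intro h0
    apply hnc
    rw [collinear_iff_of_mem (Set.mem_insert p1 _)]
    by_cases hv : (p2 - p1 : ℝ × ℝ) = 0
    · refine ⟨p3 - p1, ?_⟩
      intro p hp
      simp only [Set.mem_insert_iff, Set.mem_singleton_iff] at hp
      rcases hp with h | h | h
      · exact ⟨0, by rw [h]; simp⟩
      · refine ⟨0, ?_⟩
        have h2 : p2 = p1 := by rwa [sub_eq_zero] at hv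
        rw [h, h2]; simp
      · exact ⟨1, by rw [h]; simp⟩
    · refine ⟨p2 - p1, ?_⟩
      intro p hp
      simp only [Set.mem_insert_iff, Set.mem_singleton_iff] at hp
      rcases hp with h | h | h
      · exact ⟨0, by rw [h]; simp⟩
      · exact ⟨1, by rw [h]; simp⟩
      · by_cases h1 : v1 ≠ 0
        · refine ⟨w1 / v1, ?_⟩
          rw [h]
          have e2 : w2 * v1 = w1 * v2 := by linarith [h0]
          apply Prod.ext
          · show p3.1 = (w1 / v1) • (p2 - p1).1 + p1.1
            simp only [Prod.fst_sub, smul_eq_mul]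
            rw [← hv1]
            field_simp [hw1]
            rw [hw1]; ring
          · show p3.2 = (w1 / v1) • (p2 - p1).2 + p1.2
            simp only [Prod.snd_sub, smul_eq_mul]
            rw [← hv2]
            have : w1 / v1 * v2 = w2 := by
              field_simp; linarith [e2]
            rw [this, hw2]; ring
        · push_neg at h1
          have h2 : v2 ≠ 0 := by
            intro h2'
            apply hv
            have a1 : p2.1 = p1.1 := by rw [hv1] at h1; linarith
            have a2 : p2.2 = p1.2 := by rw [hv2] at h2'; linarith
            apply Prod.ext <;> simp [a1, a2]
          refine ⟨w2 / v2, ?_⟩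
          rw [h]
          have e2 : w1 * v2 = w2 * v1 := by linarith [h0]
          apply Prod.ext
          · show p3.1 = (w2 / v2) • (p2 - p1).1 + p1.1
            simp only [Prod.fst_sub, smul_eq_mul]
            rw [← hv1]
            have : w2 / v2 * v1 = w1 := by
              field_simp; linarith [e2]
            rw [this, hw1]; ring
          · show p3.2 = (w2 / v2) • (p2 - p1).2 + p1.2
            simp only [Prod.snd_sub, smul_eq_mul]
            rw [← hv2]
            field_simp [hw2]
            rw [hw2]; ring
  -- the affine map
  set L : ℝ × ℝ → ℝ × ℝ :=
    fun u => (p1.1 + u.1 * v1 + u.2 * w1, p1.2 + u.1 * v2 + u.2 * w2) with hL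
  set Mlin : (ℝ × ℝ) →ₗ[ℝ] (ℝ × ℝ) :=
    { toFun := fun u => (u.1 * v1 + u.2 * w1, u.1 * v2 + u.2 * w2)
      map_add' := by intro u u'; apply Prod.ext <;> simp <;> ring
      map_smul' := by intro r u; apply Prod.ext <;> simp <;> ring } with hM
  set M : (ℝ × ℝ) →L[ℝ] (ℝ × ℝ) := LinearMap.toContinuousLinearMap Mlin with hMc
  have hLM : L = fun u => p1 + M u := by
    funext u
    have hMu : M u = Mlin u := by rw [hMc]; rfl
    apply Prod.ext <;>
      simp [hL, hMu, hM, LinearMap.coe_mk, AddHom.coe_mk] <;> ring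
  -- determinant
  have hdet : (M : (ℝ × ℝ) →L[ℝ] (ℝ × ℝ)).det = v1 * w2 - v2 * w1 := by
    have hco : ((M : (ℝ × ℝ) →L[ℝ] (ℝ × ℝ)) : (ℝ × ℝ) →ₗ[ℝ] (ℝ × ℝ)) = Mlin :=
      LinearMap.coe_toContinuousLinearMap Mlin
    rw [ContinuousLinearMap.det, hco]
    have hmat : LinearMap.toMatrix (Module.Basis.finTwoProd ℝ) (Module.Basis.finTwoProd ℝ) Mlin =
        !![v1, w1; v2, w2] := by
      ext i j
      fin_cases i <;> fin_cases j <;>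
        simp [LinearMap.toMatrix_apply, hM, Module.Basis.finTwoProd_zero, Module.Basis.finTwoProd_one,
          Module.Basis.coe_finTwoProd_repr]
    rw [← LinearMap.det_toMatrix (Module.Basis.finTwoProd ℝ), hmat, Matrix.det_fin_two_of]
    ring
  -- injectivity
  have hinj : Function.Injective L := by
    intro u u' huu
    rw [Prod.ext_iff] at huu
    obtain ⟨e1, e2⟩ := huu
    simp only [hL] at e1 e2
    have hx : (u.1 - u'.1) * (v1 * w2 - v2 * w1) = 0 := by linear_combination w2 * e1 - w1 * e2
    have hy : (u.2 - u'.2) * (v1 * w2 - v2 * w1) = 0 := by linear_combination v1 * e2 - v2 * e1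
    have hx' : u.1 = u'.1 := by
      rcases mul_eq_zero.1 hx with h | h
      · linarith
      · exact absurd h hD
    have hy' : u.2 = u'.2 := by
      rcases mul_eq_zero.1 hy with h | h
      · linarith
      · exact absurd h hD
    exact Prod.ext hx' hy'
  -- T is the image of the reference simplex
  have hTL : T = L '' Sref := by
    rw [hT, ← Sref_eq_hull]
    have haff : ∃ A : (ℝ × ℝ) →ᵃ[ℝ] (ℝ × ℝ), ⇑A = L := by
      refine ⟨⟨L, Mlin, ?_⟩, rfl⟩
      intro p vv
      apply Prod.ext <;> simp [hL, hM] <;> ring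
    obtain ⟨A, hA⟩ := haff
    rw [← hA, AffineMap.image_convexHull]
    congr 1
    rw [Set.image_insert_eq, Set.image_insert_eq, Set.image_singleton, hA]
    have i1 : L (0, 0) = p1 := by apply Prod.ext <;> simp [hL]
    have i2 : L (1, 0) = p2 := by
      apply Prod.ext <;> simp [hL, hv1, hv2]
    have i3 : L (0, 1) = p3 := by
      apply Prod.ext <;> simp [hL, hw1, hw2]
    rw [i1, i2, i3]
  -- change of variables
  have hcov : ∫ x in T, f x = |v1 * w2 - v2 * w1| • ∫ u in Sref, f (L u) := by
    rw [hTL]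
    have hderiv : ∀ x ∈ Sref, HasFDerivWithinAt L M Sref x := by
      intro x _
      rw [hLM]
      exact ((M.hasFDerivAt).const_add p1).hasFDerivWithinAt
    rw [integral_image_eq_integral_abs_det_fderiv_smul volume measurableSet_Sref
      (f' := fun _ => M) hderiv (hinj.injOn) f]
    rw [hdet, ← integral_smul]
  rw [hcov]
  -- compute the integral over the reference simplex
  have hexp : (fun u : ℝ × ℝ => f (L u)) = fun u : ℝ × ℝ =>
      (a + b*p1.1 + c*p1.2 + d*p1.1^2 + e*p1.1*p1.2 + g*p1.2^2)
      + (b*v1 + c*v2 + 2*d*p1.1*v1 + e*(p1.1*v2 + p1.2*v1) + 2*g*p1.2*v2) * u.1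
      + (b*w1 + c*w2 + 2*d*p1.1*w1 + e*(p1.1*w2 + p1.2*w1) + 2*g*p1.2*w2) * u.2
      + (d*v1^2 + e*v1*v2 + g*v2^2) * u.1^2
      + (2*d*v1*w1 + e*(v1*w2 + v2*w1) + 2*g*v2*w2) * u.1*u.2
      + (d*w1^2 + e*w1*w2 + g*w2^2) * u.2^2 := by
    funext u
    rw [hf]
    simp only [hL]
    ring
  rw [hexp, integral_quadratic_Sref]
  -- finish: expand both sides and use `ring`
  rw [harea, hf, hf, hf]
  simp only [Prod.fst_add, Prod.snd_add, Prod.smul_fst, Prod.smul_snd, smul_eq_mul, hv1, hv2,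
    hw1, hw2]
  ring
end

section
/- Let p1, p2, p3 ∈ ℝ² be noncollinear points forming a triangle K; for i = 1, 2, 3 let e_i be the edge opposite p_i, m_i its midpoint, and n_i the outward unit normal of K on e_i. Let τ(x) = c + β x with c ∈ ℝ², β ∈ ℝ be a lowest-order Raviart–Thomas field. If τ(m_i) · n_i = 0 for all i = 1, 2, 3 (equivalently, the average of the normal component τ·n_i over each edge vanishes), then c = 0 and β = 0, i.e. τ ≡ 0. Hence a lowest-order Raviart–Thomas field on a nondegenerate triangle is uniquely determined by its three average normal fluxes over the edges. -/
open scoped RealInnerProductSpace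

private lemma cross_aux (v0 v1 n0 n1 ex ey : ℝ) (hU : n0^2 + n1^2 = 1)
    (hP : n0 * ex + n1 * ey = 0) (hH : v0 * n0 + v1 * n1 = 0) :
    v1 * ex - v0 * ey = 0 := by
  linear_combination (n1*ex - n0*ey)*hH + (v1*n0 - v0*n1)*hP - (v1*ex - v0*ey)*hU

private lemma coll_aux (p1 p2 p3 : EuclideanSpace ℝ (Fin 2))
    (h : (p2 0 - p1 0) * (p3 1 - p1 1) - (p2 1 - p1 1) * (p3 0 - p1 0) = 0) :
    Collinear ℝ ({p1, p2, p3} : Set (EuclideanSpace ℝ (Fin 2))) := by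
  rw [collinear_iff_of_mem (Set.mem_insert p1 _)]
  by_cases h0 : p3 0 - p1 0 = 0
  · by_cases h1 : p3 1 - p1 1 = 0
    · refine ⟨p2 - p1, ?_⟩
      rintro p (rfl | rfl | rfl)
      · exact ⟨0, by simp⟩
      · refine ⟨1, ?_⟩
        ext i
        simp [vadd_eq_add, PiLp.add_apply, PiLp.sub_apply, PiLp.smul_apply]
      · refine ⟨0, ?_⟩
        ext i
        fin_cases i <;>
          simp [vadd_eq_add, PiLp.add_apply, PiLp.sub_apply, PiLp.smul_apply] <;> linarith
    · refine ⟨p3 - p1, ?_⟩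
      rintro p (rfl | rfl | rfl)
      · exact ⟨0, by simp⟩
      · refine ⟨(p 1 - p1 1) / (p3 1 - p1 1), ?_⟩
        ext i
        fin_cases i <;>
          simp [vadd_eq_add, PiLp.add_apply, PiLp.sub_apply, PiLp.smul_apply] <;>
          field_simp <;>
          first | linear_combination h | linear_combination -h | linear_combination 2*h | linear_combination -2*h | ring
      · refine ⟨1, ?_⟩
        ext i
        simp [vadd_eq_add, PiLp.add_apply, PiLp.sub_apply, PiLp.smul_apply]
  · refine ⟨p3 - p1, ?_⟩
    rintro p (rfl | rfl | rfl)
    · exact ⟨0, by simp⟩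
    · refine ⟨(p 0 - p1 0) / (p3 0 - p1 0), ?_⟩
      ext i
      fin_cases i <;>
        simp [vadd_eq_add, PiLp.add_apply, PiLp.sub_apply, PiLp.smul_apply] <;>
        field_simp <;>
        first | linear_combination h | linear_combination -h | linear_combination 2*h | linear_combination -2*h | ring
    · refine ⟨1, ?_⟩
      ext i
      simp [vadd_eq_add, PiLp.add_apply, PiLp.sub_apply, PiLp.smul_apply]

/-- Unisolvence of the lowest-order Raviart–Thomas element on a nondegenerate
triangle: if the midpoint normal flux `τ(m_i)·n_i` vanishes on all three edges,
then the field `τ(x) = c + β x` is identically zero, i.e. `c = 0` and `β = 0`. -/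
theorem rt_unisolvence
    (p1 p2 p3 : EuclideanSpace ℝ (Fin 2))
    (hnc : ¬ Collinear ℝ ({p1, p2, p3} : Set (EuclideanSpace ℝ (Fin 2))))
    -- outward unit normals: `n i` is a unit vector, orthogonal to the edge
    -- opposite `p i`, pointing away from `p i`
    (n1 n2 n3 : EuclideanSpace ℝ (Fin 2))
    (hn1 : ‖n1‖ = 1) (hn1perp : ⟪n1, p3 - p2⟫ = 0)
    (hn1out : ⟪n1, p1 - (1/2 : ℝ) • (p2 + p3)⟫ < 0)
    (hn2 : ‖n2‖ = 1) (hn2perp : ⟪n2, p1 - p3⟫ = 0)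
    (hn2out : ⟪n2, p2 - (1/2 : ℝ) • (p3 + p1)⟫ < 0)
    (hn3 : ‖n3‖ = 1) (hn3perp : ⟪n3, p2 - p1⟫ = 0)
    (hn3out : ⟪n3, p3 - (1/2 : ℝ) • (p1 + p2)⟫ < 0)
    (c : EuclideanSpace ℝ (Fin 2)) (β : ℝ)
    (τ : EuclideanSpace ℝ (Fin 2) → EuclideanSpace ℝ (Fin 2))
    (hτ : ∀ x, τ x = c + β • x)
    (h1 : ⟪τ ((1/2 : ℝ) • (p2 + p3)), n1⟫ = 0)
    (h2 : ⟪τ ((1/2 : ℝ) • (p3 + p1)), n2⟫ = 0)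
    (h3 : ⟪τ ((1/2 : ℝ) • (p1 + p2)), n3⟫ = 0) :
    c = 0 ∧ β = 0 := by
  simp only [hτ] at h1 h2 h3
  have hD : (p2 0 - p1 0) * (p3 1 - p1 1) - (p2 1 - p1 1) * (p3 0 - p1 0) ≠ 0 := by
    intro h
    exact hnc (coll_aux p1 p2 p3 h)
  have inner2 : ∀ x y : EuclideanSpace ℝ (Fin 2), ⟪x, y⟫ = x 0 * y 0 + x 1 * y 1 := by
    intro x y
    simp [PiLp.inner_apply, Fin.sum_univ_two, RCLike.inner_apply]
    ring
  have unit : ∀ x : EuclideanSpace ℝ (Fin 2), ‖x‖ = 1 → x 0 ^ 2 + x 1 ^ 2 = 1 := by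
    intro x hx
    have h := real_inner_self_eq_norm_sq x
    rw [hx, inner2] at h
    nlinarith [h]
  have e : ∀ (x y : EuclideanSpace ℝ (Fin 2)) (i : Fin 2), (x - y) i = x i - y i :=
    fun _ _ _ => rfl
  have a : ∀ (x y : EuclideanSpace ℝ (Fin 2)) (i : Fin 2), (x + y) i = x i + y i :=
    fun _ _ _ => rfl
  have s : ∀ (r : ℝ) (x : EuclideanSpace ℝ (Fin 2)) (i : Fin 2), (r • x) i = r * x i :=
    fun _ _ _ => rfl
  rw [inner2] at h1 h2 h3 hn1perp hn2perp hn3perp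
  simp only [e, a, s] at h1 h2 h3 hn1perp hn2perp hn3perp
  have G1 : (c 1 + β * ((p2 1 + p3 1)/2)) * (p3 0 - p2 0)
      - (c 0 + β * ((p2 0 + p3 0)/2)) * (p3 1 - p2 1) = 0 := by
    have := cross_aux (c 0 + β * ((p2 0 + p3 0)/2)) (c 1 + β * ((p2 1 + p3 1)/2))
      (n1 0) (n1 1) (p3 0 - p2 0) (p3 1 - p2 1) (unit n1 hn1)
      (by linear_combination hn1perp) (by linear_combination h1)
    linarith [this]
  have G2 : (c 1 + β * ((p3 1 + p1 1)/2)) * (p1 0 - p3 0)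
      - (c 0 + β * ((p3 0 + p1 0)/2)) * (p1 1 - p3 1) = 0 := by
    have := cross_aux (c 0 + β * ((p3 0 + p1 0)/2)) (c 1 + β * ((p3 1 + p1 1)/2))
      (n2 0) (n2 1) (p1 0 - p3 0) (p1 1 - p3 1) (unit n2 hn2)
      (by linear_combination hn2perp) (by linear_combination h2)
    linarith [this]
  have G3 : (c 1 + β * ((p1 1 + p2 1)/2)) * (p2 0 - p1 0)
      - (c 0 + β * ((p1 0 + p2 0)/2)) * (p2 1 - p1 1) = 0 := by
    have := cross_aux (c 0 + β * ((p1 0 + p2 0)/2)) (c 1 + β * ((p1 1 + p2 1)/2))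
      (n3 0) (n3 1) (p2 0 - p1 0) (p2 1 - p1 1) (unit n3 hn3)
      (by linear_combination hn3perp) (by linear_combination h3)
    linarith [this]
  set D := (p2 0 - p1 0) * (p3 1 - p1 1) - (p2 1 - p1 1) * (p3 0 - p1 0) with hDdef
  have hb : β * D = 0 := by linear_combination (-1 : ℝ) * G1 - G2 - G3
  have hβ : β = 0 := by
    rcases mul_eq_zero.mp hb with h | h
    · exact h
    · exact absurd h hD
  subst hβ
  have hc0 : c 0 * D = 0 := by
    linear_combination (p1 0 - p3 0) * G1 - (p3 0 - p2 0) * G2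
  have hc1 : c 1 * D = 0 := by
    linear_combination (p1 1 - p3 1) * G1 - (p3 1 - p2 1) * G2
  refine ⟨?_, rfl⟩
  have h0 : c 0 = 0 := by
    rcases mul_eq_zero.mp hc0 with h | h
    · exact h
    · exact absurd h hD
  have h1' : c 1 = 0 := by
    rcases mul_eq_zero.mp hc1 with h | h
    · exact h
    · exact absurd h hD
  ext i
  fin_cases i <;> simpa using by assumption
end

section
/- Let X and M be real Hilbert spaces, a : X × X → ℝ a bilinear form with |a(x, y)| ≤ C_a ‖x‖‖y‖ for all x, y ∈ X, and b : X × M → ℝ a bilinear form with |b(x, q)| ≤ C_b ‖x‖‖q‖ for all x ∈ X, q ∈ M. Let Z = {x ∈ X : b(x, q) = 0 for all q ∈ M}. Assume: (i) kernel coercivity: there is α > 0 with a(z, z) ≥ α ‖z‖² for all z ∈ Z; (ii) the inf-sup condition with constant β > 0: for every q ∈ M, sup over nonzero x ∈ X of b(x, q)/‖x‖ is at least β‖q‖. Then for every pair of bounded linear functionals f : X → ℝ and g : M → ℝ there exists a unique pair (u, p) ∈ X × M such that a(u, x) + b(x, p) = f(x) for all x ∈ X and b(u, q) = g(q) for all q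 ∈ M. -/
open RealInnerProductSpace InnerProductSpace

set_option maxHeartbeats 2000000


/-- Babuška–Brezzi well-posedness of the saddle-point problem: under
boundedness of the bilinear forms, coercivity of `a` on the kernel of `b`,
and the inf-sup condition for `b`, for any bounded linear functionals `f, g`
there is a unique pair `(u, p)` with `a(u, x) + b(x, p) = f(x)` for all `x`
and `b(u, q) = g(q)` for all `q`. -/
theorem brezzi_existence_uniqueness
    {X M : Type*}
    [NormedAddCommGroup X] [InnerProductSpace ℝ X] [CompleteSpace X]
    [NormedAddCommGroup M] [InnerProductSpace ℝ M] [CompleteSpace M]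
    (a : X →ₗ[ℝ] X →ₗ[ℝ] ℝ) (b : X →ₗ[ℝ] M →ₗ[ℝ] ℝ)
    (Ca Cb α β : ℝ) (hα : 0 < α) (hβ : 0 < β)
    (ha_bdd : ∀ x y : X, |a x y| ≤ Ca * ‖x‖ * ‖y‖)
    (hb_bdd : ∀ (x : X) (q : M), |b x q| ≤ Cb * ‖x‖ * ‖q‖)
    (hcoer : ∀ z : X, (∀ q : M, b z q = 0) → α * ‖z‖ ^ 2 ≤ a z z)
    (hinfsup : ∀ q : M, β * ‖q‖ ≤ ⨆ x : {x : X // x ≠ 0}, b x q / ‖(x : X)‖)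
    (f : X →L[ℝ] ℝ) (g : M →L[ℝ] ℝ) :
    ∃! up : X × M,
      (∀ x : X, a up.1 x + b x up.2 = f x) ∧ (∀ q : M, b up.1 q = g q) := by
  -- continuous versions of the bilinear forms
  set A : X →L[ℝ] X →L[ℝ] ℝ := LinearMap.mkContinuous₂ a (max Ca 0) (fun x y => by
    rw [Real.norm_eq_abs]
    calc |a x y| ≤ Ca * ‖x‖ * ‖y‖ := ha_bdd x y
    _ ≤ max Ca 0 * ‖x‖ * ‖y‖ := by
        exact mul_le_mul_of_nonneg_right (mul_le_mul_of_nonneg_right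
          (le_max_left _ _) (norm_nonneg x)) (norm_nonneg y)) with hA
  have hAapp : ∀ x y, A x y = a x y := fun x y => rfl
  set Bc : X →L[ℝ] M →L[ℝ] ℝ := LinearMap.mkContinuous₂ b (max Cb 0) (fun x q => by
    rw [Real.norm_eq_abs]
    calc |b x q| ≤ Cb * ‖x‖ * ‖q‖ := hb_bdd x q
    _ ≤ max Cb 0 * ‖x‖ * ‖q‖ := by
        exact mul_le_mul_of_nonneg_right (mul_le_mul_of_nonneg_right
          (le_max_left _ _) (norm_nonneg x)) (norm_nonneg q)) with hBc
  -- Riesz representative operator T : M →L X with ⟪T q, x⟫ = b x q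
  set T : M →L[ℝ] X :=
    ((InnerProductSpace.toDual ℝ X).symm.toContinuousLinearEquiv :
      (X →L[ℝ] ℝ) ≃L[ℝ] X).toContinuousLinearMap.comp Bc.flip with hTdef
  have hT : ∀ (q : M) (x : X), ⟪T q, x⟫_ℝ = b x q := by
    intro q x
    simp [hTdef, InnerProductSpace.toDual_symm_apply]
    rfl
  -- lower bound for T
  have hTlow : ∀ q : M, β * ‖q‖ ≤ ‖T q‖ := by
    intro q
    refine le_trans (hinfsup q) (Real.iSup_le (fun x => ?_) (norm_nonneg _))
    rw [← hT q x]
    rcases eq_or_ne ‖(x : X)‖ 0 with h | h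
    · exact absurd (norm_eq_zero.mp h) x.2
    · rw [div_le_iff₀ (lt_of_le_of_ne (norm_nonneg _) (Ne.symm h))]
      exact real_inner_le_norm _ _
  clear_value T
  clear hTdef
  -- the Gram operator S q q' = ⟪T q, T q'⟫ is coercive on M
  set S : M →L[ℝ] M →L[ℝ] ℝ := Bc.comp T with hSdef
  have hS : ∀ q q' : M, S q q' = ⟪T q, T q'⟫_ℝ := by
    intro q q'
    have : S q q' = b (T q) q' := rfl
    rw [this, ← hT q' (T q), real_inner_comm]
  clear_value S Bc
  clear hSdef hBc
  have coerS : IsCoercive S := by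
    refine ⟨β ^ 2, by positivity, fun q => ?_⟩
    rw [hS, real_inner_self_eq_norm_mul_norm]
    have h1 := hTlow q
    have h2 : (0:ℝ) ≤ β * ‖q‖ := by positivity
    nlinarith
  set eS := coerS.continuousLinearEquivOfBilin with heS
  -- particular solution u₀ with b u₀ q = g q
  set q₀ : M := eS.symm ((InnerProductSpace.toDual ℝ M).symm g) with hq₀
  set u₀ : X := T q₀ with hu₀def
  have hu₀ : ∀ q : M, b u₀ q = g q := by
    intro q
    have h1 : b u₀ q = ⟪T q, T q₀⟫_ℝ := (hT q u₀).symm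
    have h2 : (⟪T q, T q₀⟫_ℝ) = S q₀ q := by rw [hS, real_inner_comm]
    have h3 : S q₀ q = ⟪eS q₀, q⟫_ℝ := (coerS.continuousLinearEquivOfBilin_apply q₀ q).symm
    have h4 : eS q₀ = (InnerProductSpace.toDual ℝ M).symm g := by
      rw [hq₀]; exact eS.apply_symm_apply _
    rw [h1, h2, h3, h4, InnerProductSpace.toDual_symm_apply]
  clear_value u₀ q₀ eS
  clear hu₀def hq₀ heS
  -- the kernel Z of b as the orthogonal complement of the range of T
  set R : Submodule ℝ X := LinearMap.range (T : M →ₗ[ℝ] X) with hR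
  set Z : Submodule ℝ X := Rᗮ with hZ
  have hZmem : ∀ z : X, z ∈ Z ↔ ∀ q : M, b z q = 0 := by
    intro z
    rw [hZ, Submodule.mem_orthogonal]
    constructor
    · intro h q
      rw [← hT q z]
      exact h (T q) ⟨q, rfl⟩
    · rintro h u ⟨q, rfl⟩
      exact (hT q z).trans (h q)
  haveI : CompleteSpace Z := (Submodule.isClosed_orthogonal R).completeSpace_coe
  -- Lax–Milgram on Z
  set aZ : Z →L[ℝ] Z →L[ℝ] ℝ := A.bilinearComp Z.subtypeL Z.subtypeL with haZ
  have haZapp : ∀ v w : Z, aZ v w = a (v : X) (w : X) := fun v w => rfl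
  have coerZ : IsCoercive aZ := by
    refine ⟨α, hα, fun z => ?_⟩
    have h1 := hcoer (z : X) (fun q => (hZmem z).mp z.2 q)
    have h2 : ‖z‖ = ‖(z : X)‖ := rfl
    rw [haZapp, h2]
    nlinarith [sq_nonneg ‖(z : X)‖]
  set eZ := coerZ.continuousLinearEquivOfBilin with heZ
  set ℓ : Z →L[ℝ] ℝ := (f - A u₀).comp Z.subtypeL with hℓ
  set w : Z := eZ.symm ((InnerProductSpace.toDual ℝ Z).symm ℓ) with hwdef
  have hw : ∀ z : Z, a (w : X) (z : X) = f (z : X) - a u₀ (z : X) := by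
    intro z
    have h1 : a (w : X) (z : X) = aZ w z := rfl
    have h2 : aZ w z = ⟪eZ w, z⟫_ℝ := (coerZ.continuousLinearEquivOfBilin_apply w z).symm
    have h3 : eZ w = (InnerProductSpace.toDual ℝ Z).symm ℓ := by
      rw [hwdef]; exact eZ.apply_symm_apply _
    rw [h1, h2, h3, InnerProductSpace.toDual_symm_apply]
    rfl
  clear_value w ℓ eZ aZ
  clear hwdef hℓ heZ haZ
  set u : X := u₀ + (w : X) with hu
  have hu2 : ∀ q : M, b u q = g q := by
    intro q
    rw [hu, map_add, LinearMap.add_apply, hu₀ q, (hZmem (w : X)).mp w.2 q, add_zero]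
  -- the functional f - a(u, ·) vanishes on Z
  have hvan : ∀ z : X, z ∈ Z → f z - a u z = 0 := by
    intro z hz
    have h1 : a u z = a u₀ z + a (w : X) z := by rw [hu, map_add, LinearMap.add_apply]
    rw [h1, hw ⟨z, hz⟩]
    ring
  -- Riesz representative of f - a(u, ·) lies in Zᗮ = R
  set L : X := (InnerProductSpace.toDual ℝ X).symm (f - A u) with hL
  have hLip : ∀ x : X, ⟪L, x⟫_ℝ = f x - a u x := by
    intro x
    rw [hL, InnerProductSpace.toDual_symm_apply]
    rfl
  clear_value L A u
  clear hL hu hA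
  have hanti : AntilipschitzWith (⟨β, hβ.le⟩ : NNReal)⁻¹ T := by
    refine ContinuousLinearMap.antilipschitz_of_bound T fun q => ?_
    show ‖q‖ ≤ β⁻¹ * ‖T q‖
    rw [inv_mul_eq_div, le_div_iff₀ hβ]
    linarith [hTlow q]
  have hclosedR : IsClosed (R : Set X) := by
    have := hanti.isClosed_range T.uniformContinuous
    rw [hR]
    exact this
  haveI : CompleteSpace R := hclosedR.completeSpace_coe
  have hLZ : L ∈ Zᗮ := by
    rw [Submodule.mem_orthogonal]
    intro z hz
    rw [real_inner_comm, hLip z, hvan z hz]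
  have hZorth : Zᗮ = R := by rw [hZ]; exact Submodule.orthogonal_orthogonal R
  rw [hZorth] at hLZ
  obtain ⟨p, hp⟩ := hLZ
  have h1 : ∀ x : X, a u x + b x p = f x := by
    intro x
    have h2 : b x p = ⟪T p, x⟫_ℝ := (hT p x).symm
    have h3 : (T p : X) = L := hp
    rw [h2, h3, hLip x]
    ring
  -- injectivity of T
  have hTinj : ∀ r : M, (∀ x : X, b x r = 0) → r = 0 := by
    intro r hr
    have h2 : ‖T r‖ * ‖T r‖ = 0 := by
      rw [← real_inner_self_eq_norm_mul_norm, hT r (T r), hr]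
    have h3 : ‖T r‖ = 0 := mul_self_eq_zero.mp h2
    have h4 := hTlow r
    rw [h3] at h4
    have h5 : ‖r‖ = 0 := le_antisymm
      ((mul_le_mul_iff_right₀ hβ).mp (by rw [mul_zero]; exact h4)) (norm_nonneg r)
    exact norm_eq_zero.mp h5
  refine ⟨(u, p), ⟨h1, hu2⟩, ?_⟩
  rintro ⟨u', p'⟩ ⟨h1', h2'⟩
  -- uniqueness
  have hdq : ∀ q : M, b (u' - u) q = 0 := by
    intro q
    rw [map_sub, LinearMap.sub_apply, h2' q, hu2 q, sub_self]
  have hdz : u' = u := by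
    have hcd := hcoer (u' - u) hdq
    have he : a (u' - u) (u' - u) + b (u' - u) (p' - p) = 0 := by
      have e1 := h1' (u' - u)
      have e2 := h1 (u' - u)
      have e3 : a (u' - u) (u' - u) = a u' (u' - u) - a u (u' - u) := by
        simp only [map_sub, LinearMap.sub_apply]
        ring
      have e4 : b (u' - u) (p' - p) = b (u' - u) p' - b (u' - u) p := by
        simp only [map_sub, LinearMap.sub_apply]
      linarith
    rw [hdq (p' - p), add_zero] at he
    have h5 : ‖u' - u‖ ^ 2 ≤ 0 := by nlinarith
    have h6 : ‖u' - u‖ = 0 := by nlinarith [norm_nonneg (u' - u), sq_nonneg ‖u' - u‖]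
    exact sub_eq_zero.mp (norm_eq_zero.mp h6)
  have hdp : p' = p := by
    have hpr : ∀ x : X, b x (p' - p) = 0 := by
      intro x
      have e1 := h1' x
      have e2 := h1 x
      rw [hdz] at e1
      have : b x p' = b x p := by linarith
      rw [map_sub, this, sub_self]
    have := hTinj (p' - p) hpr
    rwa [sub_eq_zero] at this
  rw [Prod.mk.injEq]
  exact ⟨hdz, hdp⟩
end

section
/- Let X and M be real Hilbert spaces, a : X × X → ℝ bilinear with |a(x, y)| ≤ C_a ‖x‖‖y‖, b : X × M → ℝ bilinear with |b(x, q)| ≤ C_b ‖x‖‖q‖, Z = {x ∈ X : b(x, q) = 0 for all q ∈ M}, a(z, z) ≥ α‖z‖² for all z ∈ Z with α > 0, and b satisfying the inf-sup condition with constant β > 0. Let f : X → ℝ and g : M → ℝ be bounded linear functionals and (u, p) ∈ X × M a solution of a(u, x) + b(x, p) = f(x) for all x ∈ X and b(u, q) = g(q) for all q ∈ M. Then ‖u‖ ≤ α⁻¹‖f‖ + β⁻¹(1 + C_a/α)‖g‖ and ‖p‖ ≤ β⁻¹(1 + C_a/α)(‖f‖ + C_a β⁻¹ ‖g‖), where ‖f‖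 and ‖g‖ denote operator norms of the functionals. -/
open InnerProductSpace
set_option maxHeartbeats 1000000


/-- Explicit stability bounds for the saddle-point problem: under boundedness,
kernel coercivity of `a` and the inf-sup condition for `b`, any solution
`(u, p)` of `a(u, x) + b(x, p) = f(x)`, `b(u, q) = g(q)` satisfies
`‖u‖ ≤ α⁻¹‖f‖ + β⁻¹(1 + C_a/α)‖g‖` and
`‖p‖ ≤ β⁻¹(1 + C_a/α)(‖f‖ + C_a β⁻¹‖g‖)`. -/
theorem brezzi_stability
    {X M : Type*}
    [NormedAddCommGroup X] [InnerProductSpace ℝ X] [CompleteSpace X]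
    [NormedAddCommGroup M] [InnerProductSpace ℝ M] [CompleteSpace M]
    (a : X →ₗ[ℝ] X →ₗ[ℝ] ℝ) (b : X →ₗ[ℝ] M →ₗ[ℝ] ℝ)
    (Ca Cb α β : ℝ) (hα : 0 < α) (hβ : 0 < β)
    (ha_bdd : ∀ x y : X, |a x y| ≤ Ca * ‖x‖ * ‖y‖)
    (hb_bdd : ∀ (x : X) (q : M), |b x q| ≤ Cb * ‖x‖ * ‖q‖)
    (hcoer : ∀ z : X, (∀ q : M, b z q = 0) → α * ‖z‖ ^ 2 ≤ a z z)
    (hinfsup : ∀ q : M, β * ‖q‖ ≤ ⨆ x : {x : X // x ≠ 0}, b x q / ‖(x : X)‖)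
    (f : X →L[ℝ] ℝ) (g : M →L[ℝ] ℝ)
    (u : X) (p : M)
    (hu : ∀ x : X, a u x + b x p = f x)
    (hp : ∀ q : M, b u q = g q) :
    ‖u‖ ≤ α⁻¹ * ‖f‖ + β⁻¹ * (1 + Ca / α) * ‖g‖ ∧
    ‖p‖ ≤ β⁻¹ * (1 + Ca / α) * (‖f‖ + Ca * β⁻¹ * ‖g‖) := by
  classical
  rcases subsingleton_or_nontrivial X with hX | hX
  · have hE : IsEmpty {x : X // x ≠ 0} := ⟨fun x => x.2 (Subsingleton.elim _ _)⟩
    have hM : ∀ q : M, q = 0 := by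
      intro q
      have h1 := hinfsup q
      rw [Real.iSup_of_isEmpty] at h1
      have h2 : ‖q‖ ≤ 0 := by nlinarith
      exact norm_le_zero_iff.mp h2
    have hu0 : u = 0 := Subsingleton.elim _ _
    have hp0 : p = 0 := hM p
    have hf0 : ‖f‖ = 0 := by
      have : f = 0 := by ext x; simp [Subsingleton.elim x (0 : X)]
      simp [this]
    have hg0 : ‖g‖ = 0 := by
      have : g = 0 := by ext q; simp [hM q]
      simp [this]
    constructor <;> simp [hu0, hp0, hf0, hg0]
  · have hCa : 0 ≤ Ca := by
      obtain ⟨x, hx⟩ := exists_ne (0 : X)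
      have hx' : 0 < ‖x‖ := norm_pos_iff.mpr hx
      nlinarith [abs_nonneg (a x x), ha_bdd x x, mul_pos hx' hx']
    have hne : Nonempty {x : X // x ≠ 0} := by
      obtain ⟨x, hx⟩ := exists_ne (0 : X); exact ⟨⟨x, hx⟩⟩
    -- the continuous bilinear form
    set B : X →L[ℝ] M →L[ℝ] ℝ :=
      LinearMap.mkContinuous₂ b Cb (fun x q => by
        rw [Real.norm_eq_abs]; exact hb_bdd x q) with hB
    -- the Riesz map T with ⟪T q, x⟫ = b x q
    set Tlin : M →ₗ[ℝ] X :=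
      { toFun := fun q => (toDual ℝ X).symm (B.flip q)
        map_add' := by intro q q'; simp
        map_smul' := by intro r q; simp } with hTlin
    set T : M →L[ℝ] X := Tlin.mkContinuous ‖B.flip‖ (fun q => by
      have h1 : ‖Tlin q‖ = ‖B.flip q‖ := by
        simp only [hTlin, LinearMap.coe_mk, AddHom.coe_mk]
        exact LinearIsometryEquiv.norm_map _ _
      rw [h1]; exact (B.flip).le_opNorm q) with hT
    have hTapp : ∀ (q : M) (x : X), (inner ℝ (T q) x : ℝ) = b x q := by
      intro q x
      have h1 : T q = (toDual ℝ X).symm (B.flip q) := rfl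
      rw [h1, toDual_symm_apply]
      rfl
    -- lower bound for T
    have hTlow : ∀ q : M, β * ‖q‖ ≤ ‖T q‖ := by
      intro q
      refine le_trans (hinfsup q) (ciSup_le fun x => ?_)
      have hx : 0 < ‖(x : X)‖ := norm_pos_iff.mpr x.2
      rw [div_le_iff₀ hx, ← hTapp q x]
      exact real_inner_le_norm _ _
    have hanti : AntilipschitzWith ⟨β⁻¹, by positivity⟩ T :=
      ContinuousLinearMap.antilipschitz_of_bound T (fun q => by
        show ‖q‖ ≤ β⁻¹ * ‖T q‖
        rw [inv_mul_eq_div, le_div_iff₀ hβ, mul_comm]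
        exact hTlow q)
    have hclosed : IsClosed (Set.range T) := hanti.isClosed_range T.uniformContinuous
    set R : Submodule ℝ X := LinearMap.range (T : M →ₗ[ℝ] X) with hR
    have hRclosed : IsClosed (R : Set X) := by
      have h1 : (R : Set X) = Set.range T := by
        ext x; simp [hR, LinearMap.mem_range]
      rw [h1]; exact hclosed
    haveI : CompleteSpace R := hRclosed.completeSpace_coe
    set Z : Submodule ℝ X := LinearMap.ker b with hZ
    have hZR : Z = Rᗮ := by
      ext x
      simp only [hZ, LinearMap.mem_ker, Submodule.mem_orthogonal]
      constructor
      · intro hx y hy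
        obtain ⟨q, rfl⟩ := hy
        rw [ContinuousLinearMap.coe_coe, hTapp]
        exact congrFun (congrArg DFunLike.coe hx) q
      · intro hx
        ext q
        have h1 := hx (T q) ⟨q, rfl⟩
        rw [hTapp] at h1
        simpa using h1
    have hZorth : Zᗮ = R := by rw [hZR, Submodule.orthogonal_orthogonal]
    haveI : CompleteSpace Z := by
      rw [hZR]; exact (Submodule.isClosed_orthogonal R).completeSpace_coe
    set z : X := (Submodule.orthogonalProjectionOnto Z u : X) with hz
    set w : X := u - z with hw
    have hzZ : ∀ q : M, b z q = 0 := by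
      intro q
      have h1 : z ∈ Z := SetLike.coe_mem _
      rw [hZ, LinearMap.mem_ker] at h1
      simpa using congrFun (congrArg DFunLike.coe h1) q
    have hwR : w ∈ R := by
      rw [← hZorth]; exact Submodule.sub_starProjection_mem_orthogonal (K := Z) u
    obtain ⟨q₀, hq₀⟩ := hwR
    clear_value z w T B Tlin R Z
    have hbw : ∀ q : M, b w q = g q := by
      intro q
      have h1 : b w q = b u q - b z q := by rw [hw]; simp
      rw [h1, hzZ, hp, sub_zero]
    have hwbound : ‖w‖ ≤ β⁻¹ * ‖g‖ := by
      rcases eq_or_ne w 0 with h0 | h0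
      · rw [h0, norm_zero]; positivity
      · have hwpos : 0 < ‖w‖ := norm_pos_iff.mpr h0
        have h1 : ‖w‖ ^ 2 = b w q₀ := by
          rw [← hq₀, ContinuousLinearMap.coe_coe, ← hTapp q₀ (T q₀), real_inner_self_eq_norm_sq]
        have h2 : b w q₀ = g q₀ := hbw q₀
        have h3 : g q₀ ≤ ‖g‖ * ‖q₀‖ := (le_abs_self _).trans (by
          rw [← Real.norm_eq_abs]; exact g.le_opNorm q₀)
        have h4 : ‖q₀‖ ≤ β⁻¹ * ‖w‖ := by
          rw [inv_mul_eq_div, le_div_iff₀ hβ, mul_comm ‖q₀‖ β, ← hq₀]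
          exact hTlow q₀
        have hg0 : 0 ≤ ‖g‖ := norm_nonneg g
        have h5 : ‖g‖ * ‖q₀‖ ≤ ‖g‖ * (β⁻¹ * ‖w‖) := mul_le_mul_of_nonneg_left h4 hg0
        have h6 : ‖w‖ * ‖w‖ ≤ (β⁻¹ * ‖g‖) * ‖w‖ := by linarith [h1, h2, h3, h5, sq_abs ‖w‖]
        exact le_of_mul_le_mul_right h6 hwpos
    have hzbound : α * ‖z‖ ≤ ‖f‖ + Ca * ‖w‖ := by
      rcases eq_or_ne z 0 with h0 | h0
      · rw [h0, norm_zero, mul_zero]; positivity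
      · have hzpos : 0 < ‖z‖ := norm_pos_iff.mpr h0
        have hc := hcoer z hzZ
        have hsplit : a z z = a u z - a w z := by
          have huzw : u = z + w := by rw [hw]; abel
          rw [huzw]; simp
        have hbzp : b z p = 0 := hzZ p
        have hfz : a u z = f z := by
          have h1 := hu z
          rw [hbzp] at h1
          linarith
        have hfz' : f z ≤ ‖f‖ * ‖z‖ := (le_abs_self _).trans (by
          rw [← Real.norm_eq_abs]; exact f.le_opNorm z)
        have haw := ha_bdd w z
        have haw' := neg_abs_le (a w z)
        have hkey : (α * ‖z‖) * ‖z‖ ≤ (‖f‖ + Ca * ‖w‖) * ‖z‖ := by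
          have hz2 : ‖z‖ ^ 2 = ‖z‖ * ‖z‖ := sq ‖z‖
          linarith [hc, hsplit, hfz, hfz', haw, haw']
        exact le_of_mul_le_mul_right hkey hzpos
    have hubound : ‖u‖ ≤ α⁻¹ * ‖f‖ + β⁻¹ * (1 + Ca / α) * ‖g‖ := by
      have htri : ‖u‖ ≤ ‖z‖ + ‖w‖ := by
        have huzw : u = z + w := by rw [hw]; abel
        rw [huzw]; exact norm_add_le z w
      have hz' : ‖z‖ ≤ α⁻¹ * (‖f‖ + Ca * ‖w‖) := by
        rw [inv_mul_eq_div, le_div_iff₀ hα, mul_comm]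
        exact hzbound
      have hg0 : 0 ≤ ‖g‖ := norm_nonneg g
      have hαi : 0 < α⁻¹ := by positivity
      have hβi : 0 < β⁻¹ := by positivity
      have hstep : ‖z‖ + ‖w‖ ≤ α⁻¹ * ‖f‖ + (1 + Ca / α) * ‖w‖ := by
        rw [div_eq_mul_inv]
        linarith [hz']
      have hco : 0 ≤ 1 + Ca / α := by positivity
      calc ‖u‖ ≤ ‖z‖ + ‖w‖ := htri
        _ ≤ α⁻¹ * ‖f‖ + (1 + Ca / α) * ‖w‖ := hstep
        _ ≤ α⁻¹ * ‖f‖ + (1 + Ca / α) * (β⁻¹ * ‖g‖) :=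
            add_le_add_right (mul_le_mul_of_nonneg_left hwbound hco) _
        _ = α⁻¹ * ‖f‖ + β⁻¹ * (1 + Ca / α) * ‖g‖ := by ring
    refine ⟨hubound, ?_⟩
    have hpbound : β * ‖p‖ ≤ ‖f‖ + Ca * ‖u‖ := by
      refine le_trans (hinfsup p) (ciSup_le fun x => ?_)
      have hx : 0 < ‖(x : X)‖ := norm_pos_iff.mpr x.2
      rw [div_le_iff₀ hx]
      have h1 : b x p = f x - a u x := by have := hu x; linarith
      have h2 : f (x : X) ≤ ‖f‖ * ‖(x : X)‖ := (le_abs_self _).trans (by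
        rw [← Real.norm_eq_abs]; exact f.le_opNorm _)
      have h3 := ha_bdd u x
      have h4 := neg_abs_le (a u x)
      rw [h1]
      linarith
    have hfp : ‖p‖ ≤ β⁻¹ * (‖f‖ + Ca * ‖u‖) := by
      rw [inv_mul_eq_div, le_div_iff₀ hβ, mul_comm]
      exact hpbound
    have hf0 : 0 ≤ ‖f‖ := norm_nonneg f
    have hg0 : 0 ≤ ‖g‖ := norm_nonneg g
    have hβi : 0 < β⁻¹ := by positivity
    calc ‖p‖ ≤ β⁻¹ * (‖f‖ + Ca * ‖u‖) := hfp
      _ ≤ β⁻¹ * (‖f‖ + Ca * (α⁻¹ * ‖f‖ + β⁻¹ * (1 + Ca / α) * ‖g‖)) :=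
          mul_le_mul_of_nonneg_left
            (add_le_add_right (mul_le_mul_of_nonneg_left hubound hCa) _) hβi.le
      _ = β⁻¹ * (1 + Ca / α) * (‖f‖ + Ca * β⁻¹ * ‖g‖) := by field_simp; ring
end

section
/- (Fortin criterion.) Let X and M be real normed vector spaces, X_h ⊆ X and M_h ⊆ M subspaces, and b : X × M → ℝ a bilinear form. Assume: (i) for every q ∈ M_h, sup over nonzero x ∈ X of b(x, q)/‖x‖ ≥ β ‖q‖ for some β > 0; (ii) there is a linear map Π : X → X with range contained in X_h such that ‖Π x‖ ≤ C_Π ‖x‖ for all x ∈ X (with C_Π > 0) and b(x − Π x, q) = 0 for all x ∈ X and all q ∈ M_h. Then the discrete inf-sup condition holds with constant β/C_Π: for every q ∈ M_h, sup over nonzero y ∈ X_h of b(y, q)/‖y‖ ≥ (β/C_Π) ‖q‖. -/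
/-- Fortin criterion: if `b` satisfies the inf-sup condition over `X × M_h`
with constant `β`, and there is a bounded linear operator `proj : X → X` with
range in `X_h` preserving the form (`b(x − proj x, q) = 0` for all `q ∈ M_h`),
then the discrete inf-sup condition holds with constant `β / C_Π`. -/
theorem fortin_criterion
    {X M : Type*}
    [NormedAddCommGroup X] [NormedSpace ℝ X]
    [NormedAddCommGroup M] [NormedSpace ℝ M]
    (Xh : Submodule ℝ X) (Mh : Submodule ℝ M)
    (b : X →ₗ[ℝ] M →ₗ[ℝ] ℝ)
    (β CPi : ℝ) (hβ : 0 < β) (hCPi : 0 < CPi)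
    (hinfsup : ∀ q ∈ Mh, β * ‖q‖ ≤ ⨆ x : {x : X // x ≠ 0}, b x q / ‖(x : X)‖)
    (proj : X →ₗ[ℝ] X)
    (hrange : ∀ x : X, proj x ∈ Xh)
    (hbdd : ∀ x : X, ‖proj x‖ ≤ CPi * ‖x‖)
    (hpres : ∀ x : X, ∀ q ∈ Mh, b (x - proj x) q = 0) :
    ∀ q ∈ Mh,
      (β / CPi) * ‖q‖ ≤ ⨆ y : {y : X // y ∈ Xh ∧ y ≠ 0}, b y q / ‖(y : X)‖ := by
  intro q hq
  have hproj_eq : ∀ x : X, b x q = b (proj x) q := by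
    intro x
    have h : b x q - b (proj x) q = 0 := by
      simpa [map_sub, LinearMap.sub_apply] using hpres x q hq
    linarith
  have hSc := hinfsup q hq
  by_cases h0 : ∀ x : X, b x q = 0
  · -- everything vanishes; hence q has norm 0
    have hSc0 : (⨆ x : {x : X // x ≠ 0}, b x q / ‖(x : X)‖) = 0 := by
      have : ∀ x : {x : X // x ≠ 0}, b x q / ‖(x : X)‖ = 0 := fun x => by
        simp [h0 x]
      simp only [this]
      exact Real.iSup_const_zero
    rw [hSc0] at hSc
    have hq0 : ‖q‖ = 0 := le_antisymm (by nlinarith [norm_nonneg q]) (norm_nonneg q)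
    have hSh0 : (⨆ y : {y : X // y ∈ Xh ∧ y ≠ 0}, b y q / ‖(y : X)‖) = 0 := by
      have : ∀ y : {y : X // y ∈ Xh ∧ y ≠ 0}, b y q / ‖(y : X)‖ = 0 := fun y => by
        simp [h0 y]
      simp only [this]
      exact Real.iSup_const_zero
    rw [hq0, hSh0]
    simp
  · push_neg at h0
    obtain ⟨x₀, hx₀⟩ := h0
    have hx₀ne : x₀ ≠ 0 := by
      intro h; apply hx₀; rw [h]; simp
    have hpx₀ : b (proj x₀) q ≠ 0 := by rw [← hproj_eq]; exact hx₀
    have hpx₀ne : proj x₀ ≠ 0 := by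
      intro h; apply hpx₀; rw [h]; simp
    by_cases hbd : BddAbove (Set.range fun x : {x : X // x ≠ 0} => b x q / ‖(x : X)‖)
    · -- discrete family bounded above
      have hbd_h : BddAbove (Set.range fun y : {y : X // y ∈ Xh ∧ y ≠ 0} =>
          b y q / ‖(y : X)‖) := by
        obtain ⟨B, hB⟩ := hbd
        refine ⟨B, ?_⟩
        rintro _ ⟨⟨y, hy1, hy2⟩, rfl⟩
        exact hB ⟨⟨y, hy2⟩, rfl⟩
      set Sh := ⨆ y : {y : X // y ∈ Xh ∧ y ≠ 0}, b y q / ‖(y : X)‖ with hShdef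
      have hSh_nonneg : 0 ≤ Sh := by
        have h1 : b (proj x₀) q / ‖proj x₀‖ ≤ Sh :=
          le_ciSup hbd_h ⟨proj x₀, hrange x₀, hpx₀ne⟩
        have h2 : -(b (proj x₀) q / ‖proj x₀‖) ≤ Sh := by
          have := le_ciSup hbd_h ⟨-proj x₀, Xh.neg_mem (hrange x₀),
            neg_ne_zero.mpr hpx₀ne⟩
          simpa [map_neg, neg_div] using this
        linarith
      have key : (⨆ x : {x : X // x ≠ 0}, b x q / ‖(x : X)‖) ≤ CPi * Sh := by
        haveI : Nonempty {x : X // x ≠ 0} := ⟨⟨x₀, hx₀ne⟩⟩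
        apply ciSup_le
        rintro ⟨x, hxne⟩
        simp only []
        rw [hproj_eq x]
        by_cases hpx : proj x = 0
        · rw [hpx]
          simp only [map_zero, LinearMap.zero_apply, zero_div]
          exact mul_nonneg hCPi.le hSh_nonneg
        · have h1 : b (proj x) q / ‖proj x‖ ≤ Sh :=
            le_ciSup hbd_h ⟨proj x, hrange x, hpx⟩
          have hnp : (0:ℝ) < ‖proj x‖ := norm_pos_iff.mpr hpx
          have hnx : (0:ℝ) < ‖x‖ := norm_pos_iff.mpr hxne
          rw [div_le_iff₀ hnp] at h1
          have h3 : Sh * ‖proj x‖ ≤ Sh * (CPi * ‖x‖) :=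
            mul_le_mul_of_nonneg_left (hbdd x) hSh_nonneg
          rw [div_le_iff₀ hnx]
          nlinarith
      have : β * ‖q‖ ≤ CPi * Sh := le_trans hSc key
      rw [div_mul_eq_mul_div, div_le_iff₀ hCPi]
      linarith
    · -- unbounded: continuous sup is junk 0, forcing q = 0, contradiction
      rw [Real.iSup_of_not_bddAbove hbd] at hSc
      have hq0 : q = 0 := by
        have : ‖q‖ = 0 := le_antisymm (by nlinarith [norm_nonneg q]) (norm_nonneg q)
        exact norm_eq_zero.mp this
      exact absurd (by rw [hq0]; simp) hx₀
end
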